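/- Let f ∈ L¹(D) on the unit disk and let φ solve Δφ = f in D with φ = 0 on ∂D. Then φ ∈ L^{2,∞}(D) and ‖φ‖_{L^{2,∞}(D)} ≤ C‖f‖_{L¹(D)} for a universal constant C. -/

import Mathlib

set_option maxHeartbeats 1000000

open Real MeasureTheory

/-- The weak-L² (L^{2,∞}) quasinorm of a function on a subset of ℂ,
    via the distribution function: sup_{t>0} t · vol{z ∈ s : |f z| > t}^{1/2}. -/
noncomputable def wnorm2 (f : ℂ → ℝ) (s : Set ℂ) : ENNReal :=
  ⨆ t : {t : ℝ // 0 < t}, ENNReal.ofReal t.1 *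
    (MeasureTheory.volume {z : ℂ | z ∈ s ∧ (t.1 : ℝ) < |f z|}) ^ (1 / 2 : ℝ)

/-- The Green function of the unit disk: G(z,w) = (1/2π)·log|(z−w)/(1−w̄z)|. -/
noncomputable def greenD (z w : ℂ) : ℝ :=
  (1 / (2 * Real.pi)) * Real.log ‖(z - w) / (1 - (starRingEnd ℂ) w * z)‖

/-- The solution of Δφ = f in D, φ = 0 on ∂D, given by the Green function. -/
noncomputable def greenSol (f : ℂ → ℝ) (z : ℂ) : ℝ :=
  ∫ w in Metric.ball (0 : ℂ) 1, greenD z w * f w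

namespace Stmt19Aux

lemma normSq_identity (z w : ℂ) :
    Complex.normSq (1 - (starRingEnd ℂ) w * z) - Complex.normSq (z - w)
      = (1 - Complex.normSq w) * (1 - Complex.normSq z) := by
  simp only [Complex.normSq_apply, Complex.sub_re, Complex.sub_im, Complex.mul_re,
    Complex.mul_im, Complex.one_re, Complex.one_im, Complex.conj_re, Complex.conj_im]
  ring

lemma green_abs_le {z w : ℂ} (hz : ‖z‖ < 1) (hw : ‖w‖ < 1) :
    |greenD z w| ≤ (1 / (2 * Real.pi)) * Real.log (2 / ‖z - w‖) := by
  have hc : (0:ℝ) < 1 / (2 * Real.pi) := by positivity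
  rcases eq_or_ne z w with rfl | hzw
  · simp [greenD]
  · have hrpos : 0 < ‖z - w‖ := by
      simpa using (norm_pos_iff.mpr (sub_ne_zero.mpr hzw))
    set r := ‖z - w‖ with hr
    set d := ‖1 - (starRingEnd ℂ) w * z‖ with hd
    have h1 : Complex.normSq w < 1 := by
      rw [← Complex.sq_norm]; nlinarith [norm_nonneg w]
    have h2 : Complex.normSq z < 1 := by
      rw [← Complex.sq_norm]; nlinarith [norm_nonneg z]
    have hkey := normSq_identity z w
    have hsq : r ^ 2 ≤ d ^ 2 := by
      rw [hr, hd, Complex.sq_norm, Complex.sq_norm]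
      nlinarith [Complex.normSq_nonneg w, Complex.normSq_nonneg z]
    have hdnn : 0 ≤ d := norm_nonneg _
    have hdpos : 0 < d := by nlinarith
    have hrd : r ≤ d := by nlinarith [sq_nonneg (r - d), sq_nonneg (r + d)]
    have hd2 : d ≤ 2 := by
      have h3 := norm_sub_le (1:ℂ) ((starRingEnd ℂ) w * z)
      simp only [norm_one, norm_mul, Complex.norm_conj] at h3
      have : ‖w‖ * ‖z‖ ≤ 1 := by
        nlinarith [norm_nonneg w, norm_nonneg z]
      rw [hd]
      calc ‖1 - (starRingEnd ℂ) w * z‖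
          ≤ 1 + ‖w‖ * ‖z‖ := by
            simpa [map_mul, Complex.norm_conj] using h3
        _ ≤ 2 := by linarith
    have hval : greenD z w = (1 / (2 * Real.pi)) * Real.log (r / d) := by
      rw [greenD, norm_div]
    have hq0 : 0 < r / d := div_pos hrpos hdpos
    have hq1 : r / d ≤ 1 := (div_le_one hdpos).mpr hrd
    rw [hval, abs_mul, abs_of_pos hc]
    refine mul_le_mul_of_nonneg_left ?_ hc.le
    have hlogle : |Real.log (r / d)| = Real.log (d / r) := by
      rw [abs_of_nonpos (Real.log_nonpos hq0.le hq1), ← Real.log_inv, inv_div]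
    rw [hlogle]
    exact Real.log_le_log (div_pos hdpos hrpos) (by gcongr)

noncomputable def Kfun (u : ℂ) : ENNReal :=
  ENNReal.ofReal ((1 / (2 * Real.pi) * Real.log (2 / ‖u‖)) ^ 2)

lemma Kfun_measurable : Measurable Kfun := by
  apply ENNReal.measurable_ofReal.comp
  exact ((measurable_const.mul (Real.measurable_log.comp
    (measurable_const.div continuous_norm.measurable))).pow_const 2)

noncomputable def Kc : ENNReal := ∫⁻ u in Metric.ball (0:ℂ) 2, Kfun u

lemma translate_le {w : ℂ} (hw : w ∈ Metric.ball (0:ℂ) 1) :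
    ∫⁻ z in Metric.ball (0:ℂ) 1, Kfun (z - w) ≤ Kc := by
  have hw' : ‖w‖ < 1 := by simpa [Complex.dist_eq] using hw
  have hsub : ∀ z ∈ Metric.ball (0:ℂ) 1, z - w ∈ Metric.ball (0:ℂ) 2 := by
    intro z hz
    have hz' : ‖z‖ < 1 := by simpa [Complex.dist_eq] using hz
    have := norm_sub_le z w
    simp only [Metric.mem_ball, Complex.dist_eq, sub_zero]
    linarith
  calc ∫⁻ z in Metric.ball (0:ℂ) 1, Kfun (z - w)
      = ∫⁻ z in Metric.ball (0:ℂ) 1,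
          (Metric.ball (0:ℂ) 2).indicator Kfun (z - w) := by
        refine setLIntegral_congr_fun measurableSet_ball (fun z hz => ?_)
        rw [Set.indicator_of_mem (hsub z hz)]
    _ ≤ ∫⁻ z, (Metric.ball (0:ℂ) 2).indicator Kfun (z - w) :=
        setLIntegral_le_lintegral _ _
    _ = ∫⁻ u, (Metric.ball (0:ℂ) 2).indicator Kfun u := by
        exact (measurePreserving_sub_right volume w).lintegral_comp
          (Kfun_measurable.indicator measurableSet_ball)
    _ = Kc := by rw [lintegral_indicator measurableSet_ball Kfun]; rfl

noncomputable def P (t : ℝ) : ENNReal :=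
  (Set.Ioo (-2:ℝ) 2).indicator
    (fun t => ENNReal.ofReal 8 * (ENNReal.ofReal |t|) ^ (-(1/4) : ℝ)) t

lemma P_measurable : Measurable P := by
  apply Measurable.indicator _ measurableSet_Ioo
  exact measurable_const.mul
    ((ENNReal.measurable_ofReal.comp measurable_abs).pow_const _)

lemma lintegral_P_lt_top : ∫⁻ t, P t < ⊤ := by
  have base : ∫⁻ t in Set.Ioo (0:ℝ) 2, (ENNReal.ofReal |t|) ^ (-(1/4) : ℝ) < ⊤ := by
    have hint : IntegrableOn (fun t : ℝ => t ^ (-(1/4) : ℝ)) (Set.Ioo 0 2) := by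
      have h := intervalIntegral.intervalIntegrable_rpow' (a := 0) (b := 2)
        (r := -(1/4)) (by norm_num)
      rw [intervalIntegrable_iff_integrableOn_Ioo_of_le (by norm_num)] at h
      exact h
    have heq : ∀ t ∈ Set.Ioo (0:ℝ) 2,
        (ENNReal.ofReal |t|) ^ (-(1/4) : ℝ) = ENNReal.ofReal (t ^ (-(1/4) : ℝ)) := by
      intro t ht
      rw [abs_of_pos ht.1, ENNReal.ofReal_rpow_of_pos ht.1]
    rw [setLIntegral_congr_fun measurableSet_Ioo heq]
    calc ∫⁻ t in Set.Ioo (0:ℝ) 2, ENNReal.ofReal (t ^ (-(1/4) : ℝ))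
        ≤ ∫⁻ t in Set.Ioo (0:ℝ) 2, (‖t ^ (-(1/4) : ℝ)‖₊ : ENNReal) := by
          refine lintegral_mono fun t => ?_
          rw [← enorm_eq_nnnorm, Real.enorm_eq_ofReal_abs]
          exact ENNReal.ofReal_le_ofReal (le_abs_self _)
      _ < ⊤ := hint.2
  have Qmeas : Measurable fun t : ℝ => (ENNReal.ofReal |t|) ^ (-(1/4) : ℝ) :=
    (ENNReal.measurable_ofReal.comp measurable_abs).pow_const _
  set Q : ℝ → ENNReal := fun t => (ENNReal.ofReal |t|) ^ (-(1/4) : ℝ) with hQ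
  have hPeq : ∫⁻ t, P t = ENNReal.ofReal 8 * ∫⁻ t in Set.Ioo (-2:ℝ) 2, Q t := by
    calc ∫⁻ t, P t
        = ∫⁻ t in Set.Ioo (-2:ℝ) 2, ENNReal.ofReal 8 * Q t := by
          rw [← lintegral_indicator measurableSet_Ioo]; rfl
      _ = ENNReal.ofReal 8 * ∫⁻ t in Set.Ioo (-2:ℝ) 2, Q t :=
          lintegral_const_mul _ Qmeas
  rw [hPeq]
  refine ENNReal.mul_lt_top ENNReal.ofReal_lt_top ?_
  have hsubset : Set.Ioo (-2:ℝ) 2 ⊆ Set.Ioc (-2:ℝ) 0 ∪ Set.Ioo (0:ℝ) 2 := by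
    intro t ht
    rcases le_or_gt t 0 with h | h
    · exact Or.inl ⟨ht.1, h⟩
    · exact Or.inr ⟨h, ht.2⟩
  have hneg : ∫⁻ t in Set.Ioc (-2:ℝ) 0, Q t ≤ ∫⁻ t in Set.Ico (0:ℝ) 2, Q t := by
    have h1 : ∫⁻ t, (Set.Ioc (-2:ℝ) 0).indicator Q (-t)
        = ∫⁻ t in Set.Ioc (-2:ℝ) 0, Q t := by
      rw [(Measure.measurePreserving_neg (volume : Measure ℝ)).lintegral_comp
        (Qmeas.indicator measurableSet_Ioc), lintegral_indicator measurableSet_Ioc]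
    have h2 : ∀ t : ℝ, (Set.Ioc (-2:ℝ) 0).indicator Q (-t)
        = (Set.Ico (0:ℝ) 2).indicator Q t := by
      intro t
      have hmem : (-t ∈ Set.Ioc (-2:ℝ) 0) ↔ (t ∈ Set.Ico (0:ℝ) 2) := by
        constructor
        · intro h; exact ⟨by linarith [h.2], by linarith [h.1]⟩
        · intro h; exact ⟨by linarith [h.2], by linarith [h.1]⟩
      by_cases h : t ∈ Set.Ico (0:ℝ) 2
      · rw [Set.indicator_of_mem (hmem.mpr h), Set.indicator_of_mem h, hQ]
        simp [abs_neg]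
      · rw [Set.indicator_of_notMem (fun hc => h (hmem.mp hc)),
          Set.indicator_of_notMem h]
    rw [← h1]
    simp_rw [h2]
    rw [lintegral_indicator measurableSet_Ico]
  have hIco : ∫⁻ t in Set.Ico (0:ℝ) 2, Q t ≤ ∫⁻ t in Set.Ioo (0:ℝ) 2, Q t := by
    have : Set.Ico (0:ℝ) 2 ⊆ {0} ∪ Set.Ioo (0:ℝ) 2 := by
      intro t ht
      rcases eq_or_lt_of_le ht.1 with h | h
      · exact Or.inl (by simp [← h])
      · exact Or.inr ⟨h, ht.2⟩
    calc ∫⁻ t in Set.Ico (0:ℝ) 2, Q t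
        ≤ ∫⁻ t in ({0} ∪ Set.Ioo (0:ℝ) 2 : Set ℝ), Q t := lintegral_mono_set this
      _ ≤ (∫⁻ t in ({0}: Set ℝ), Q t) + ∫⁻ t in Set.Ioo (0:ℝ) 2, Q t :=
          lintegral_union_le _ _ _
      _ = ∫⁻ t in Set.Ioo (0:ℝ) 2, Q t := by
          rw [setLIntegral_measure_zero _ _ (by simp), zero_add]
  calc ∫⁻ t in Set.Ioo (-2:ℝ) 2, Q t
      ≤ ∫⁻ t in (Set.Ioc (-2:ℝ) 0 ∪ Set.Ioo (0:ℝ) 2 : Set ℝ), Q t :=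
        lintegral_mono_set hsubset
    _ ≤ (∫⁻ t in Set.Ioc (-2:ℝ) 0, Q t) + ∫⁻ t in Set.Ioo (0:ℝ) 2, Q t :=
        lintegral_union_le _ _ _
    _ ≤ (∫⁻ t in Set.Ioo (0:ℝ) 2, Q t) + ∫⁻ t in Set.Ioo (0:ℝ) 2, Q t := by
        gcongr ?_ + _; exact hneg.trans hIco
    _ < ⊤ := ENNReal.add_lt_top.mpr ⟨base, base⟩

lemma Kfun_le {u : ℂ} (hu : u ∈ Metric.ball (0:ℂ) 2) :
    Kfun u ≤ ENNReal.ofReal (16 * (2 / ‖u‖) ^ ((1:ℝ)/2)) := by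
  have hu' : ‖u‖ < 2 := by simpa [Complex.dist_eq] using hu
  rcases eq_or_ne u 0 with rfl | hne
  · simp [Kfun]
  · have hr : 0 < ‖u‖ := norm_pos_iff.mpr hne
    set x : ℝ := 2 / ‖u‖ with hx
    have hx1 : 1 ≤ x := (one_le_div hr).mpr hu'.le
    have hx0 : 0 ≤ x := by linarith
    have hL0 : 0 ≤ Real.log x := Real.log_nonneg hx1
    have hL : Real.log x ≤ 4 * x ^ ((1:ℝ)/4) := by
      have := Real.log_le_rpow_div hx0 (by norm_num : (0:ℝ) < 1/4)
      calc Real.log x ≤ x ^ ((1:ℝ)/4) / (1/4) := this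
        _ = 4 * x ^ ((1:ℝ)/4) := by ring
    have hc : (0:ℝ) < 1 / (2 * Real.pi) := by positivity
    have hc1 : 1 / (2 * Real.pi) ≤ 1 := by
      rw [div_le_one (by positivity)]
      nlinarith [Real.pi_gt_three]
    apply ENNReal.ofReal_le_ofReal
    have hsq : (1 / (2 * Real.pi) * Real.log x) ^ 2 ≤ (Real.log x) ^ 2 := by
      rw [mul_pow]
      have h2 : (1 / (2 * Real.pi)) ^ 2 ≤ 1 := by nlinarith
      nlinarith [sq_nonneg (Real.log x)]
    refine hsq.trans ?_
    have h2 : (Real.log x) ^ 2 ≤ (4 * x ^ ((1:ℝ)/4)) ^ 2 := by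
      nlinarith [hL0, hL]
    refine h2.trans ?_
    have h3 : (4 * x ^ ((1:ℝ)/4)) ^ 2 = 16 * (x ^ ((1:ℝ)/4)) ^ 2 := by ring
    rw [h3]
    have h4 : (x ^ ((1:ℝ)/4)) ^ 2 = x ^ ((1:ℝ)/2) := by
      rw [← Real.rpow_natCast (x ^ ((1:ℝ)/4)) 2, ← Real.rpow_mul hx0]
      norm_num
    rw [h4]

lemma C1 {u : ℂ} (hu : u ∈ Metric.ball (0:ℂ) 2) :
    ENNReal.ofReal (16 * (2 / ‖u‖) ^ ((1:ℝ)/2)) ≤ P u.re * P u.im := by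
  have hu' : ‖u‖ < 2 := by simpa [Complex.dist_eq] using hu
  have hre : |u.re| < 2 := lt_of_le_of_lt (Complex.abs_re_le_norm u) hu'
  have him : |u.im| < 2 := lt_of_le_of_lt (Complex.abs_im_le_norm u) hu'
  have hre' : u.re ∈ Set.Ioo (-2:ℝ) 2 := abs_lt.mp hre
  have him' : u.im ∈ Set.Ioo (-2:ℝ) 2 := abs_lt.mp him
  rw [P.eq_def, P.eq_def, Set.indicator_of_mem hre', Set.indicator_of_mem him']
  rcases eq_or_ne u.re 0 with h0 | hre0
  · rw [h0]
    have htop : (ENNReal.ofReal |(0:ℝ)|) ^ (-(1/4) : ℝ) = ⊤ := by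
      simp [ENNReal.zero_rpow_of_neg, show (-(1/4):ℝ) < 0 by norm_num]
    rw [htop]
    have hne2 : ENNReal.ofReal 8 * (ENNReal.ofReal |u.im|) ^ (-(1/4) : ℝ) ≠ 0 := by
      apply mul_ne_zero (by norm_num)
      intro h
      rw [ENNReal.rpow_eq_zero_iff] at h
      rcases h with ⟨h1, h2⟩ | ⟨h1, h2⟩
      · norm_num at h2
      · exact ENNReal.ofReal_ne_top h1
    have h8 : (ENNReal.ofReal 8) ≠ 0 := by simp
    rw [ENNReal.mul_top h8, ENNReal.top_mul hne2]
    exact le_top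
  rcases eq_or_ne u.im 0 with h0 | him0
  · rw [h0]
    have htop : (ENNReal.ofReal |(0:ℝ)|) ^ (-(1/4) : ℝ) = ⊤ := by
      simp [ENNReal.zero_rpow_of_neg, show (-(1/4):ℝ) < 0 by norm_num]
    have h8 : (ENNReal.ofReal 8) ≠ 0 := by simp
    have hne2 : ENNReal.ofReal 8 * (ENNReal.ofReal |u.re|) ^ (-(1/4) : ℝ) ≠ 0 := by
      apply mul_ne_zero h8
      intro h
      rw [ENNReal.rpow_eq_zero_iff] at h
      rcases h with ⟨h1, h2⟩ | ⟨h1, h2⟩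
      · norm_num at h2
      · exact ENNReal.ofReal_ne_top h1
    rw [htop, ENNReal.mul_top h8, ENNReal.mul_top hne2]
    exact le_top
  · have hx : 0 < |u.re| := abs_pos.mpr hre0
    have hy : 0 < |u.im| := abs_pos.mpr him0
    have hr : 0 < ‖u‖ := by
      have : u ≠ 0 := fun h => hre0 (by simp [h])
      exact norm_pos_iff.mpr this
    have hprod : Real.sqrt (|u.re| * |u.im|) ≤ ‖u‖ := by
      have h1 : |u.re| * |u.im| ≤ (‖u‖) ^ 2 := by
        rw [Complex.sq_norm, Complex.normSq_apply]
        nlinarith [abs_nonneg u.re, abs_nonneg u.im, sq_abs u.re, sq_abs u.im,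
          sq_nonneg (|u.re| - |u.im|)]
      calc Real.sqrt (|u.re| * |u.im|) ≤ Real.sqrt ((‖u‖) ^ 2) :=
            Real.sqrt_le_sqrt h1
        _ = ‖u‖ := Real.sqrt_sq hr.le
    have hsp : 0 < Real.sqrt (|u.re| * |u.im|) := Real.sqrt_pos.mpr (by positivity)
    have key : 16 * (2 / ‖u‖) ^ ((1:ℝ)/2)
        ≤ 8 * |u.re| ^ (-(1/4):ℝ) * (8 * |u.im| ^ (-(1/4):ℝ)) := by
      have step1 : (2 / ‖u‖) ^ ((1:ℝ)/2)
          ≤ (2 / Real.sqrt (|u.re| * |u.im|)) ^ ((1:ℝ)/2) := by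
        apply Real.rpow_le_rpow (by positivity) _ (by norm_num)
        exact div_le_div_of_nonneg_left (by norm_num) hsp hprod
      have step2 : (2 / Real.sqrt (|u.re| * |u.im|)) ^ ((1:ℝ)/2)
          = Real.sqrt 2 * (|u.re| * |u.im|) ^ (-(1/4):ℝ) := by
        rw [Real.div_rpow (by norm_num) hsp.le, Real.sqrt_eq_rpow,
          Real.sqrt_eq_rpow, ← Real.rpow_mul (by positivity)]
        norm_num
        rw [Real.rpow_neg (by positivity), div_eq_mul_inv]
      have step3 : (|u.re| * |u.im|) ^ (-(1/4):ℝ)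
          = |u.re| ^ (-(1/4):ℝ) * |u.im| ^ (-(1/4):ℝ) :=
        Real.mul_rpow hx.le hy.le
      have hs2 : Real.sqrt 2 ≤ 2 := by
        have h4 : Real.sqrt 4 = 2 := by
          rw [show (4:ℝ) = 2^2 by norm_num, Real.sqrt_sq (by norm_num : (0:ℝ) ≤ 2)]
        calc Real.sqrt 2 ≤ Real.sqrt 4 := Real.sqrt_le_sqrt (by norm_num)
          _ = 2 := h4
      calc 16 * (2 / ‖u‖) ^ ((1:ℝ)/2)
          ≤ 16 * (2 / Real.sqrt (|u.re| * |u.im|)) ^ ((1:ℝ)/2) := by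
            nlinarith [step1, Real.rpow_nonneg
              (show (0:ℝ) ≤ 2 / ‖u‖ by positivity) ((1:ℝ)/2)]
        _ = 16 * Real.sqrt 2 * (|u.re| ^ (-(1/4):ℝ) * |u.im| ^ (-(1/4):ℝ)) := by
            rw [step2, step3]; ring
        _ ≤ 64 * (|u.re| ^ (-(1/4):ℝ) * |u.im| ^ (-(1/4):ℝ)) := by
            have hnn : 0 ≤ |u.re| ^ (-(1/4):ℝ) * |u.im| ^ (-(1/4):ℝ) := by positivity
            nlinarith [hs2, Real.sqrt_nonneg 2]
        _ = 8 * |u.re| ^ (-(1/4):ℝ) * (8 * |u.im| ^ (-(1/4):ℝ)) := by ring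
    calc ENNReal.ofReal (16 * (2 / ‖u‖) ^ ((1:ℝ)/2))
        ≤ ENNReal.ofReal (8 * |u.re| ^ (-(1/4):ℝ) * (8 * |u.im| ^ (-(1/4):ℝ))) :=
          ENNReal.ofReal_le_ofReal key
      _ = ENNReal.ofReal (8 * |u.re| ^ (-(1/4):ℝ)) *
            ENNReal.ofReal (8 * |u.im| ^ (-(1/4):ℝ)) := by
          rw [ENNReal.ofReal_mul (by positivity)]
      _ = ENNReal.ofReal 8 * (ENNReal.ofReal |u.re|) ^ (-(1/4) : ℝ) *
            (ENNReal.ofReal 8 * (ENNReal.ofReal |u.im|) ^ (-(1/4) : ℝ)) := by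
          rw [ENNReal.ofReal_mul (by norm_num), ENNReal.ofReal_mul (by norm_num),
            ENNReal.ofReal_rpow_of_pos hx, ENNReal.ofReal_rpow_of_pos hy]

lemma Kc_lt_top : Kc < ⊤ := by
  have step1 : Kc ≤ ∫⁻ u in Metric.ball (0:ℂ) 2, P u.re * P u.im := by
    rw [Kc]
    refine lintegral_mono_ae ((ae_restrict_iff' measurableSet_ball).mpr
      (ae_of_all _ fun u hu => ?_))
    exact (Kfun_le hu).trans (C1 hu)
  have step2 : ∫⁻ u in Metric.ball (0:ℂ) 2, P u.re * P u.im
      ≤ ∫⁻ u : ℂ, P u.re * P u.im := setLIntegral_le_lintegral _ _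
  have step3 : ∫⁻ u : ℂ, P u.re * P u.im = (∫⁻ t, P t) * ∫⁻ t, P t := by
    have hmeas : Measurable fun p : ℝ × ℝ => P p.1 * P p.2 :=
      (P_measurable.comp measurable_fst).mul (P_measurable.comp measurable_snd)
    have h := Complex.volume_preserving_equiv_real_prod.lintegral_comp hmeas
    calc ∫⁻ u : ℂ, P u.re * P u.im
        = ∫⁻ p : ℝ × ℝ, P p.1 * P p.2 := h
      _ = (∫⁻ t, P t) * ∫⁻ t, P t := by
          rw [MeasureTheory.Measure.volume_eq_prod]
          exact lintegral_prod_mul P_measurable.aemeasurable P_measurable.aemeasurable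
  calc Kc ≤ (∫⁻ t, P t) * ∫⁻ t, P t := step1.trans (step2.trans step3.le)
    _ < ⊤ := ENNReal.mul_lt_top lintegral_P_lt_top lintegral_P_lt_top

lemma greenD_measurable : Measurable (fun p : ℂ × ℂ => greenD p.1 p.2) := by
  have h1 : Measurable fun p : ℂ × ℂ => ‖p.1 - p.2‖ :=
    continuous_norm.measurable.comp (measurable_fst.sub measurable_snd)
  have h2 : Measurable fun p : ℂ × ℂ =>
      ‖1 - (starRingEnd ℂ) p.2 * p.1‖ :=
    continuous_norm.measurable.comp (measurable_const.sub
      ((Complex.continuous_conj.measurable.comp measurable_snd).mul measurable_fst))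
  have heq : (fun p : ℂ × ℂ => greenD p.1 p.2) = fun p =>
      (1 / (2 * Real.pi)) * Real.log (‖p.1 - p.2‖ /
        ‖1 - (starRingEnd ℂ) p.2 * p.1‖) := by
    funext p; rw [greenD, norm_div]
  rw [heq]
  exact measurable_const.mul (Real.measurable_log.comp (h1.div h2))

lemma green_sq_le {z w : ℂ} (hz : z ∈ Metric.ball (0:ℂ) 1)
    (hw : w ∈ Metric.ball (0:ℂ) 1) :
    ((‖greenD z w‖₊ : ENNReal)) ^ (2:ℝ) ≤ Kfun (z - w) := by
  have hz' : ‖z‖ < 1 := by simpa [Complex.dist_eq] using hz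
  have hw' : ‖w‖ < 1 := by simpa [Complex.dist_eq] using hw
  have hb := green_abs_le hz' hw'
  rw [← enorm_eq_nnnorm, Real.enorm_eq_ofReal_abs, ENNReal.rpow_two, sq,
    ← ENNReal.ofReal_mul (abs_nonneg _), ← sq]
  apply ENNReal.ofReal_le_ofReal
  exact pow_le_pow_left₀ (abs_nonneg _) hb 2

lemma main_bound (g : ℂ → ℝ) (hg : Measurable g) :
    ∫⁻ z in Metric.ball (0:ℂ) 1, (∫⁻ w in Metric.ball (0:ℂ) 1,
        (‖greenD z w‖₊ : ENNReal) * ‖g w‖₊) ^ (2:ℝ)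
      ≤ Kc * (∫⁻ w in Metric.ball (0:ℂ) 1, (‖g w‖₊ : ENNReal)) ^ (2:ℝ) := by
  set μD := volume.restrict (Metric.ball (0:ℂ) 1) with hμD
  set F : ℂ → ENNReal := fun w => (‖g w‖₊ : ENNReal) with hF
  set G' : ℂ → ℂ → ENNReal := fun z w => (‖greenD z w‖₊ : ENNReal) with hG'
  set A : ENNReal := ∫⁻ w, F w ∂μD with hA
  have hFm : Measurable F := hg.nnnorm.coe_nnreal_ennreal
  have hGm : Measurable fun p : ℂ × ℂ => G' p.1 p.2 :=
    greenD_measurable.nnnorm.coe_nnreal_ennreal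
  have hGzm : ∀ z, Measurable fun w => G' z w := by
    intro z
    have := hGm.comp (f := fun w : ℂ => (z, w)) (measurable_const.prodMk measurable_id)
    exact this
  have hGwm : ∀ w, Measurable fun z => G' z w := by
    intro w
    exact hGm.comp (f := fun z : ℂ => (z, w)) (measurable_id.prodMk measurable_const)
  set X : ℂ → ENNReal := fun z => ∫⁻ w, G' z w ^ (2:ℝ) * F w ∂μD with hX
  have hXm : Measurable X := by
    rw [hX]
    exact Measurable.lintegral_prod_right'
      (f := fun p : ℂ × ℂ => G' p.1 p.2 ^ (2:ℝ) * F p.2)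
      ((hGm.pow_const _).mul (hFm.comp measurable_snd))
  have hCS : ∀ z, (∫⁻ w, G' z w * F w ∂μD) ≤ X z ^ ((1:ℝ)/2) * A ^ ((1:ℝ)/2) := by
    intro z
    have conj : Real.HolderConjugate 2 2 := Real.HolderConjugate.two_two
    have ham : AEMeasurable (fun w => G' z w * F w ^ ((1:ℝ)/2)) μD :=
      ((hGzm z).mul (hFm.pow_const _)).aemeasurable
    have hbm : AEMeasurable (fun w => F w ^ ((1:ℝ)/2)) μD :=
      (hFm.pow_const _).aemeasurable
    have h := ENNReal.lintegral_mul_le_Lp_mul_Lq μD conj ham hbm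
    have hab : (fun w => (G' z w * F w ^ ((1:ℝ)/2)) * F w ^ ((1:ℝ)/2))
        = fun w => G' z w * F w := by
      funext w
      rw [mul_assoc, ← ENNReal.rpow_add_of_nonneg _ _ (by norm_num) (by norm_num)]
      norm_num
    have ha2 : (fun w => (G' z w * F w ^ ((1:ℝ)/2)) ^ (2:ℝ))
        = fun w => G' z w ^ (2:ℝ) * F w := by
      funext w
      rw [ENNReal.mul_rpow_of_nonneg _ _ (by norm_num : (0:ℝ) ≤ 2),
        ← ENNReal.rpow_mul]
      norm_num
    have hb2 : (fun w => (F w ^ ((1:ℝ)/2)) ^ (2:ℝ)) = fun w => F w := by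
      funext w
      rw [← ENNReal.rpow_mul]
      norm_num
    simp only [Pi.mul_apply] at h
    rw [hab, ha2, hb2] at h
    rw [hX, hA]
    exact h
  have hCS2 : ∀ z, (∫⁻ w, G' z w * F w ∂μD) ^ (2:ℝ) ≤ X z * A := by
    intro z
    have h := ENNReal.rpow_le_rpow (hCS z) (by norm_num : (0:ℝ) ≤ 2)
    rwa [ENNReal.mul_rpow_of_nonneg _ _ (by norm_num : (0:ℝ) ≤ 2),
      ← ENNReal.rpow_mul, ← ENNReal.rpow_mul,
      show (1:ℝ)/2 * 2 = 1 by norm_num, ENNReal.rpow_one, ENNReal.rpow_one] at h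
  calc ∫⁻ z, (∫⁻ w, G' z w * F w ∂μD) ^ (2:ℝ) ∂μD
      ≤ ∫⁻ z, X z * A ∂μD := lintegral_mono hCS2
    _ = (∫⁻ z, X z ∂μD) * A := lintegral_mul_const _ hXm
    _ ≤ (Kc * A) * A := by
        apply mul_le_mul_left
        have hswap : ∫⁻ z, X z ∂μD = ∫⁻ w, ∫⁻ z, G' z w ^ (2:ℝ) * F w ∂μD ∂μD := by
          apply lintegral_lintegral_swap
          exact ((hGm.pow_const _).mul (hFm.comp measurable_snd)).aemeasurable
        rw [hswap]
        have hinner : ∀ w, w ∈ Metric.ball (0:ℂ) 1 →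
            ∫⁻ z, G' z w ^ (2:ℝ) * F w ∂μD ≤ Kc * F w := by
          intro w hw
          have h1 : ∫⁻ z, G' z w ^ (2:ℝ) * F w ∂μD
              = (∫⁻ z, G' z w ^ (2:ℝ) ∂μD) * F w :=
            lintegral_mul_const _ ((hGwm w).pow_const _)
          rw [h1]
          apply mul_le_mul_left
          calc ∫⁻ z, G' z w ^ (2:ℝ) ∂μD
              ≤ ∫⁻ z in Metric.ball (0:ℂ) 1, Kfun (z - w) := by
                rw [hμD]
                refine lintegral_mono_ae ((ae_restrict_iff' measurableSet_ball).mpr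
                  (ae_of_all _ fun z hz => ?_))
                exact green_sq_le hz hw
            _ ≤ Kc := translate_le hw
        calc ∫⁻ w, ∫⁻ z, G' z w ^ (2:ℝ) * F w ∂μD ∂μD
            ≤ ∫⁻ w, Kc * F w ∂μD := by
              rw [hμD]
              refine lintegral_mono_ae ((ae_restrict_iff' measurableSet_ball).mpr
                (ae_of_all _ fun w hw => ?_))
              exact hinner w hw
          _ = Kc * A := lintegral_const_mul _ hFm
    _ = Kc * A ^ (2:ℝ) := by rw [ENNReal.rpow_two, sq, mul_assoc]

end Stmt19Aux

open Stmt19Aux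

theorem stmt19 :
    ∃ C : ℝ, 0 < C ∧
      ∀ f : ℂ → ℝ, IntegrableOn f (Metric.ball (0 : ℂ) 1) →
        wnorm2 (greenSol f) (Metric.ball (0 : ℂ) 1)
          ≤ ENNReal.ofReal (C * ∫ w in Metric.ball (0 : ℂ) 1, |f w|) := by
  refine ⟨Real.sqrt Kc.toReal + 1, by positivity, ?_⟩
  intro f hf
  obtain ⟨g, hgm, hfg⟩ := hf.aemeasurable
  set μD := volume.restrict (Metric.ball (0:ℂ) 1) with hμD
  have hfg' : (fun w => (‖f w‖₊ : ENNReal)) =ᵐ[μD] fun w => (‖g w‖₊ : ENNReal) :=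
    hfg.mono fun w h => by simp [h]
  have hA : ENNReal.ofReal (∫ w in Metric.ball (0:ℂ) 1, |f w|)
      = ∫⁻ w, (‖g w‖₊ : ENNReal) ∂μD := by
    rw [← lintegral_congr_ae hfg']
    have h := ofReal_integral_norm_eq_lintegral_enorm hf
    exact h
  set A := ∫⁻ w, (‖g w‖₊ : ENNReal) ∂μD with hAdef
  set Φ : ℂ → ENNReal :=
    fun z => ∫⁻ w, (‖greenD z w‖₊ : ENNReal) * ‖g w‖₊ ∂μD with hΦ
  have hgm2 : Measurable fun p : ℂ × ℂ => (‖g p.2‖₊ : ENNReal) :=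
    (hgm.nnnorm.coe_nnreal_ennreal).comp (f := (Prod.snd : ℂ × ℂ → ℂ)) measurable_snd
  have hΦm : Measurable Φ := by
    rw [hΦ]
    exact Measurable.lintegral_prod_right'
      (f := fun p : ℂ × ℂ => (‖greenD p.1 p.2‖₊ : ENNReal) * ‖g p.2‖₊)
      ((greenD_measurable.nnnorm.coe_nnreal_ennreal).mul hgm2)
  have hstep1 : ∀ z, (‖greenSol f z‖₊ : ENNReal) ≤ Φ z := by
    intro z
    calc (‖greenSol f z‖₊ : ENNReal)
        ≤ ∫⁻ w, (‖greenD z w * f w‖₊ : ENNReal) ∂μD :=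
          enorm_integral_le_lintegral_enorm _
      _ = ∫⁻ w, (‖greenD z w‖₊ : ENNReal) * ‖f w‖₊ ∂μD := by
          refine lintegral_congr fun w => ?_
          rw [nnnorm_mul, ENNReal.coe_mul]
      _ = Φ z := lintegral_congr_ae (hfg.mono fun w h => by simp [h])
  have hmain : ∫⁻ z, Φ z ^ (2:ℝ) ∂μD ≤ Kc * A ^ (2:ℝ) := main_bound g hgm
  rw [wnorm2]
  apply iSup_le
  rintro ⟨t, ht⟩
  simp only
  have hset : volume {z : ℂ | z ∈ Metric.ball (0:ℂ) 1 ∧ t < |greenSol f z|}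
      = μD {z : ℂ | t < |greenSol f z|} := by
    rw [hμD, Measure.restrict_apply' measurableSet_ball]
    congr 1
    ext z
    simp [and_comm]
  have hsubset : {z : ℂ | t < |greenSol f z|}
      ⊆ {z : ℂ | (ENNReal.ofReal t) ^ (2:ℝ) ≤ Φ z ^ (2:ℝ)} := by
    intro z hz
    have h1 : ENNReal.ofReal t ≤ Φ z := by
      refine le_trans ?_ (hstep1 z)
      rw [← enorm_eq_nnnorm, Real.enorm_eq_ofReal_abs]
      exact ENNReal.ofReal_le_ofReal (le_of_lt hz)
    exact ENNReal.rpow_le_rpow h1 (by norm_num)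
  have cheb := mul_meas_ge_le_lintegral₀
    (μ := μD) ((hΦm.pow_const (2:ℝ)).aemeasurable) ((ENNReal.ofReal t) ^ (2:ℝ))
  calc ENNReal.ofReal t *
        (volume {z : ℂ | z ∈ Metric.ball (0:ℂ) 1 ∧ t < |greenSol f z|}) ^ (1/2 : ℝ)
      = ((ENNReal.ofReal t) ^ (2:ℝ) * μD {z : ℂ | t < |greenSol f z|}) ^ (1/2 : ℝ) := by
        rw [hset, ENNReal.mul_rpow_of_nonneg _ _ (by norm_num : (0:ℝ) ≤ 1/2),
          ← ENNReal.rpow_mul]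
        norm_num
    _ ≤ ((ENNReal.ofReal t) ^ (2:ℝ) *
          μD {z : ℂ | (ENNReal.ofReal t) ^ (2:ℝ) ≤ Φ z ^ (2:ℝ)}) ^ (1/2 : ℝ) := by
        apply ENNReal.rpow_le_rpow _ (by norm_num)
        exact mul_le_mul_right (measure_mono hsubset) _
    _ ≤ (∫⁻ z, Φ z ^ (2:ℝ) ∂μD) ^ (1/2 : ℝ) :=
        ENNReal.rpow_le_rpow cheb (by norm_num)
    _ ≤ (Kc * A ^ (2:ℝ)) ^ (1/2 : ℝ) := ENNReal.rpow_le_rpow hmain (by norm_num)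
    _ = Kc ^ (1/2 : ℝ) * A := by
        rw [ENNReal.mul_rpow_of_nonneg _ _ (by norm_num : (0:ℝ) ≤ 1/2),
          ← ENNReal.rpow_mul]
        norm_num
    _ ≤ ENNReal.ofReal (Real.sqrt Kc.toReal + 1) * A := by
        apply mul_le_mul_left
        calc Kc ^ (1/2 : ℝ)
            = (ENNReal.ofReal Kc.toReal) ^ (1/2 : ℝ) := by
              rw [ENNReal.ofReal_toReal Kc_lt_top.ne]
          _ = ENNReal.ofReal (Kc.toReal ^ (1/2 : ℝ)) :=
              ENNReal.ofReal_rpow_of_nonneg ENNReal.toReal_nonneg (by norm_num)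
          _ = ENNReal.ofReal (Real.sqrt Kc.toReal) := by rw [Real.sqrt_eq_rpow]
          _ ≤ ENNReal.ofReal (Real.sqrt Kc.toReal + 1) :=
              ENNReal.ofReal_le_ofReal (by linarith [Real.sqrt_nonneg Kc.toReal])
    _ = ENNReal.ofReal ((Real.sqrt Kc.toReal + 1) *
          ∫ w in Metric.ball (0:ℂ) 1, |f w|) := by
        rw [ENNReal.ofReal_mul (by positivity), hA]
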